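/- In the tensor product of R-modules H ⊗_R H, for every s ∈ S one has Σ_{w∈W} (−1)^{ℓ(w)} (h_s·h_w) ⊗ (h_w⁻¹·h_s) = −q_s · Σ_{w∈W} (−1)^{ℓ(w)} h_w ⊗ h_w⁻¹. -/

import Mathlib

open scoped Classical TensorProduct

namespace OkuyamaHecke

/-- For an element `hs` of an `R`-algebra `H`, the `R`-submodule of `H ⊗[R] H`
spanned by the elements `(x·hs) ⊗ y - x ⊗ (hs·y)` (for `hs = h_s` this is the
kernel of the canonical map `H ⊗_R H → H ⊗_{H_s} H`). -/
def Ns (R : Type) [CommRing R] (H : Type) [Ring H] [Algebra R H] (hs : H) :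
    Submodule R (H ⊗[R] H) :=
  Submodule.span R
    {z : H ⊗[R] H | ∃ x y : H, z = (x * hs) ⊗ₜ[R] y - x ⊗ₜ[R] (hs * y)}

end OkuyamaHecke

open OkuyamaHecke

/-- Remark 18 of [Cabanes, On Okuyama's theorems about
Alvis-Curtis duality].  In the Iwahori–Hecke algebra `H` of a finite Coxeter
system, for each simple reflection `s`, one has
`Σ_w (-1)^{ℓ(w)} (h_s h_w) ⊗ (h_w⁻¹ h_s) = -q_s Σ_w (-1)^{ℓ(w)} h_w ⊗ h_w⁻¹`
in `H ⊗_R H`. -/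
theorem okuyama_statement11
    {B : Type} {W : Type} [Group W] [Fintype W] {M : CoxeterMatrix B}
    (cs : CoxeterSystem M W)
    (R : Type) [CommRing R] (H : Type) [Ring H] [Algebra R H]
    (q : B → Rˣ)
    (hq : ∀ s t : B, IsConj (cs.simple s) (cs.simple t) → q s = q t)
    (h : W → H) (bW : Module.Basis W R H) (hbW : ∀ w : W, bW w = h w)
    (h1 : h 1 = 1)
    (hmul : ∀ w w' : W, cs.length (w * w') = cs.length w + cs.length w' →
        h w * h w' = h (w * w'))
    (hquad : ∀ s : B, h (cs.simple s) * h (cs.simple s) =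
        ((q s : R) - 1) • h (cs.simple s) + (q s : R) • (1 : H))
    (hunit : ∀ w : W, IsUnit (h w))
    (s : B) :
    ∑ w : W, ((-1 : ℤ) ^ cs.length w) •
        ((h (cs.simple s) * h w) ⊗ₜ[R] (Ring.inverse (h w) * h (cs.simple s)))
      = -((q s : R) •
          ∑ w : W, ((-1 : ℤ) ^ cs.length w) • (h w ⊗ₜ[R] Ring.inverse (h w))) := by
  classical
  set σ := cs.simple s with hσdef
  set Q : R := (q s : R) with hQdef
  have hσσ : σ * σ = 1 := cs.simple_mul_simple_self s
  have hcancel : ∀ w : W, σ * (σ * w) = w := fun w => by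
    rw [← mul_assoc, hσσ, one_mul]
  have hσlen : cs.length σ = 1 := cs.length_simple s
  have hlen : ∀ w : W, cs.length (σ * w) = cs.length w + 1 ∨
      cs.length (σ * w) + 1 = cs.length w := fun w => cs.length_simple_mul w s
  have hsign : ∀ w : W, ((-1 : ℤ) ^ cs.length (σ * w)) = -((-1 : ℤ) ^ cs.length w) := by
    intro w
    rcases hlen w with hl | hl
    · rw [hl, pow_succ]; ring
    · rw [← hl, pow_succ]; ring
  -- facts about h σ and its inverse
  have hσu : IsUnit (h σ) := hunit σ
  have hinvσ : Ring.inverse (h σ) * h σ = 1 := Ring.inverse_mul_cancel _ hσu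
  have hquadσ : h σ * h σ = (Q - 1) • h σ + Q • (1 : H) := hquad s
  have hsmulinv : Q • Ring.inverse (h σ) = h σ - (Q - 1) • (1 : H) := by
    have h2 : h σ * (h σ - (Q - 1) • (1 : H)) = Q • (1 : H) := by
      rw [mul_sub, hquadσ, mul_smul_comm, mul_one]; abel
    calc Q • Ring.inverse (h σ) = Ring.inverse (h σ) * (Q • (1 : H)) := by
          rw [mul_smul_comm, mul_one]
      _ = Ring.inverse (h σ) * (h σ * (h σ - (Q - 1) • (1 : H))) := by rw [h2]
      _ = (Ring.inverse (h σ) * h σ) * (h σ - (Q - 1) • (1 : H)) := by rw [mul_assoc]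
      _ = h σ - (Q - 1) • (1 : H) := by rw [hinvσ, one_mul]
  have hsform : h σ = Q • Ring.inverse (h σ) + (Q - 1) • (1 : H) := by
    rw [hsmulinv]; abel
  -- inverse of a product
  have invprod : ∀ v w : W, h σ * h v = h w →
      Ring.inverse (h w) = Ring.inverse (h v) * Ring.inverse (h σ) := by
    intro v w hvw
    have huw : IsUnit (h w) := hunit w
    have huv : IsUnit (h v) := hunit v
    have hone : h w * (Ring.inverse (h v) * Ring.inverse (h σ)) = 1 := by
      rw [← hvw, mul_assoc, ← mul_assoc (h v), Ring.mul_inverse_cancel _ huv, one_mul,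
        Ring.mul_inverse_cancel _ hσu]
    calc Ring.inverse (h w)
        = Ring.inverse (h w) * (h w * (Ring.inverse (h v) * Ring.inverse (h σ))) := by
          rw [hone, mul_one]
      _ = (Ring.inverse (h w) * h w) * (Ring.inverse (h v) * Ring.inverse (h σ)) := by
          rw [mul_assoc]
      _ = Ring.inverse (h v) * Ring.inverse (h σ) := by
          rw [Ring.inverse_mul_cancel _ huw, one_mul]
  have hup : ∀ w : W, cs.length (σ * w) = cs.length w + 1 → h σ * h w = h (σ * w) := by
    intro w hw
    exact hmul σ w (by rw [hw, hσlen]; ring)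
  -- the cross-term function
  set u : W → W := fun w => if cs.IsLeftDescent w s then w else σ * w with hudef
  set c : W → H ⊗[R] H := fun w =>
    ((-1 : ℤ) ^ cs.length w) • ((Q - 1) • ((h (u w)) ⊗ₜ[R] Ring.inverse (h (σ * u w))))
    with hcdef
  have hdesc : ∀ w : W, cs.IsLeftDescent (σ * w) s ↔ ¬ cs.IsLeftDescent w s := by
    intro w
    have hne : cs.length (σ * w) ≠ cs.length w := cs.length_simple_mul_ne w s
    simp only [CoxeterSystem.IsLeftDescent, ← hσdef, hcancel w]
    omega
  -- key per-element identity
  have key : ∀ w : W, ((-1 : ℤ) ^ cs.length w) •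
      ((h σ * h w) ⊗ₜ[R] (Ring.inverse (h w) * h σ))
      = Q • (((-1 : ℤ) ^ cs.length w) •
          (h (σ * w) ⊗ₜ[R] Ring.inverse (h (σ * w)))) + c w := by
    intro w
    by_cases hd : cs.IsLeftDescent w s
    · -- descent case: ℓ(σw) + 1 = ℓ w
      have hl : cs.length (σ * w) + 1 = cs.length w := by
        have := hd
        simp only [CoxeterSystem.IsLeftDescent, ← hσdef] at this
        rcases hlen w with hl | hl
        · omega
        · exact hl
      have hlv : cs.length (σ * (σ * w)) = cs.length (σ * w) + 1 := by
        rw [hcancel w]; omega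
      have m1 : h σ * h (σ * w) = h w := by
        have := hup (σ * w) hlv
        rwa [hcancel w] at this
      have i1 : Ring.inverse (h w) = Ring.inverse (h (σ * w)) * Ring.inverse (h σ) :=
        invprod (σ * w) w m1
      have e1 : Ring.inverse (h w) * h σ = Ring.inverse (h (σ * w)) := by
        rw [i1, mul_assoc, hinvσ, mul_one]
      have e2 : h σ * h w = (Q - 1) • h w + Q • h (σ * w) := by
        rw [← m1, ← mul_assoc, hquadσ, add_mul, smul_mul_assoc, smul_mul_assoc, one_mul, m1]
      have hu : u w = w := if_pos hd
      rw [e1, e2, hcdef]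
      simp only [hu]
      rw [TensorProduct.add_tmul, TensorProduct.smul_tmul', TensorProduct.smul_tmul',
        smul_add]
      simp only [TensorProduct.smul_tmul', smul_comm Q ((-1 : ℤ) ^ cs.length w)]
      abel
    · -- ascent case: ℓ(σw) = ℓ w + 1
      have hl : cs.length (σ * w) = cs.length w + 1 := by
        have := hd
        simp only [CoxeterSystem.IsLeftDescent, ← hσdef] at this
        rcases hlen w with hl | hl
        · exact hl
        · omega
      have m1 : h σ * h w = h (σ * w) := hup w hl
      have i1 : Ring.inverse (h (σ * w)) = Ring.inverse (h w) * Ring.inverse (h σ) :=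
        invprod w (σ * w) m1
      have e1 : Ring.inverse (h w) * h σ
          = Q • Ring.inverse (h (σ * w)) + (Q - 1) • Ring.inverse (h w) := by
        rw [hsform, mul_add, mul_smul_comm, mul_smul_comm, mul_one, ← i1]
      have hu : u w = σ * w := if_neg hd
      rw [e1, m1, hcdef]
      simp only [hu, hcancel w]
      rw [TensorProduct.tmul_add, TensorProduct.tmul_smul, TensorProduct.tmul_smul,
        smul_add, smul_comm ((-1 : ℤ) ^ cs.length w) Q]
  -- sum of cross terms vanishes
  have hu_flip : ∀ w : W, u (σ * w) = u w := by
    intro w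
    by_cases hd : cs.IsLeftDescent w s
    · have : ¬ cs.IsLeftDescent (σ * w) s := by rw [hdesc]; simpa using hd
      simp only [hudef, if_pos hd, if_neg this, hcancel w]
    · have : cs.IsLeftDescent (σ * w) s := (hdesc w).mpr hd
      simp only [hudef, if_pos this, if_neg hd]
  have hc_flip : ∀ w : W, c w + c (σ * w) = 0 := by
    intro w
    rw [hcdef]
    simp only [hu_flip w, hsign w, neg_smul]
    abel
  have hcsum : ∑ w : W, c w = 0 := by
    apply Finset.sum_ninvolution (fun w => σ * w)
    · exact fun w => hc_flip w
    · intro w _ hw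
      exact cs.length_simple_mul_ne w s (by rw [hσdef] at hw; rw [hw])
    · intro w; exact Finset.mem_univ _
    · exact hcancel
  -- reindexing the main sum
  have hre : ∑ w : W, ((-1 : ℤ) ^ cs.length w) •
      (h (σ * w) ⊗ₜ[R] Ring.inverse (h (σ * w)))
      = -∑ w : W, ((-1 : ℤ) ^ cs.length w) • (h w ⊗ₜ[R] Ring.inverse (h w)) := by
    rw [← Finset.sum_neg_distrib]
    exact Fintype.sum_equiv (Equiv.mulLeft σ)
      (fun w => ((-1 : ℤ) ^ cs.length w) • (h (σ * w) ⊗ₜ[R] Ring.inverse (h (σ * w))))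
      (fun v => -(((-1 : ℤ) ^ cs.length v) • (h v ⊗ₜ[R] Ring.inverse (h v))))
      (fun w => by
        simp only [Equiv.coe_mulLeft, hsign w, neg_smul, neg_neg])
  calc ∑ w : W, ((-1 : ℤ) ^ cs.length w) •
        ((h σ * h w) ⊗ₜ[R] (Ring.inverse (h w) * h σ))
      = ∑ w : W, (Q • (((-1 : ℤ) ^ cs.length w) •
          (h (σ * w) ⊗ₜ[R] Ring.inverse (h (σ * w)))) + c w) :=
        Finset.sum_congr rfl fun w _ => key w
    _ = Q • (∑ w : W, ((-1 : ℤ) ^ cs.length w) •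
          (h (σ * w) ⊗ₜ[R] Ring.inverse (h (σ * w)))) + ∑ w : W, c w := by
        rw [Finset.sum_add_distrib, Finset.smul_sum]
    _ = -(Q • ∑ w : W, ((-1 : ℤ) ^ cs.length w) • (h w ⊗ₜ[R] Ring.inverse (h w))) := by
        rw [hcsum, add_zero, hre, smul_neg]
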